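/- Let d ≥ 2 and let 𝒞 : Matrix d d ℂ → Matrix d d ℂ be a linear map satisfying 𝒞(U ρ U†) = U 𝒞(ρ) U† for every unitary U ∈ Matrix d d ℂ and every ρ ∈ Matrix d d ℂ. Then there exist scalars α, β ∈ ℂ such that the Choi operator of 𝒞 equals C = α (1/d) |I⟩⟩⟨⟨I| + β (I_{d²} − (1/d) |I⟩⟩⟨⟨I|); moreover, if 𝒞 is trace preserving then α + (d² − 1)β = d, and if 𝒞 is completely positive then α, β ≥ 0. -/

import Mathlib

open ComplexOrder

noncomputable section

/-- Choi operator `∑ i j, F(E i j) ⊗ E i j` of a map between matrix algebras,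
where `E i j` are the matrix units. -/
def choiFun {I O : Type} [Fintype I] [DecidableEq I]
    (F : Matrix I I ℂ → Matrix O O ℂ) : Matrix (O × I) (O × I) ℂ :=
  ∑ i : I, ∑ j : I,
    Matrix.kroneckerMap (· * ·) (F (Matrix.single i j 1)) (Matrix.single i j 1)

/-- The extension `F ⊗ id` of a map on matrices, acting on a composite system. -/
def tensorId {I O K : Type} (F : Matrix I I ℂ → Matrix O O ℂ)
    (M : Matrix (I × K) (I × K) ℂ) : Matrix (O × K) (O × K) ℂ :=
  fun p q => F (fun i j => M (i, p.2) (j, q.2)) p.1 q.1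

/-- Complete positivity of a linear map between matrix algebras: for every
`k ∈ ℕ`, `F ⊗ id_{Matrix (Fin k) (Fin k) ℂ}` preserves positive semidefiniteness. -/
def IsCPMap {I O : Type} [Fintype I] [Fintype O]
    (F : Matrix I I ℂ →ₗ[ℂ] Matrix O O ℂ) : Prop :=
  ∀ (k : ℕ) (M : Matrix (I × Fin k) (I × Fin k) ℂ),
    M.PosSemidef → (tensorId (⇑F) M).PosSemidef

/-- Quantum channel: completely positive and trace preserving. -/
def IsCPTPMap {I O : Type} [Fintype I] [Fintype O]
    (F : Matrix I I ℂ →ₗ[ℂ] Matrix O O ℂ) : Prop :=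
  IsCPMap F ∧ ∀ M : Matrix I I ℂ, (F M).trace = M.trace

/-- Partial trace over the first tensor factor. -/
def ptr1 {O I : Type} [Fintype O] (C : Matrix (O × I) (O × I) ℂ) : Matrix I I ℂ :=
  fun i j => ∑ p : O, C (p, i) (p, j)

/-- Partial trace over the second tensor factor. -/
def ptr2 {O I : Type} [Fintype I] (C : Matrix (O × I) (O × I) ℂ) : Matrix O O ℂ :=
  fun p q => ∑ j : I, C (p, j) (q, j)

/-- `dyadM K = |K⟩⟩⟨⟨K|`, the rank-one operator associated with the
vectorization `|K⟩⟩ = ∑ i j, K i j |i⟩⊗|j⟩` of the matrix `K`. -/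
def dyadM {m n : Type} (K : Matrix m n ℂ) : Matrix (m × n) (m × n) ℂ :=
  fun p q => K p.1 p.2 * star (K q.1 q.2)

/- ---------------- auxiliary lemmas ---------------- -/

lemma choiFun_apply' {I O : Type} [Fintype I] [DecidableEq I]
    (F : Matrix I I ℂ → Matrix O O ℂ) (p q : O) (i j : I) :
    choiFun F (p, i) (q, j) = F (Matrix.single i j 1) p q := by
  simp [choiFun, Matrix.sum_apply, Matrix.single, ite_and]

lemma phase_comb' (d : ℕ) (i j p q : Fin d)
    (h : ∀ k : Fin d,
      (if i = k then Complex.I else 1) * star (if j = k then Complex.I else 1)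
        = (if p = k then Complex.I else 1) * star (if q = k then Complex.I else 1)) :
    (i = j ∧ p = q) ∨ (i = p ∧ j = q) := by
  by_cases hij : i = j
  · left
    refine ⟨hij, ?_⟩
    subst hij
    by_contra hpq
    have hqp : ¬ q = p := fun h' => hpq h'.symm
    have hpq' : ¬ p = q := hpq
    by_cases hip : i = p
    · have hq := h q
      clear h
      have hiq : ¬ i = q := fun h' => hpq (hip.symm.trans h')
      simp [hip, hiq, hpq', Complex.ext_iff] at hq <;> norm_num at hq
    · have hp := h p
      clear h
      by_cases hiq : i = q <;>
        simp [hip, hiq, hqp, Complex.ext_iff] at hp <;> norm_num at hp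
  · right
    have hji : ¬ j = i := fun h' => hij h'.symm
    have hi := h i
    have hj := h j
    clear h
    have hip : i = p := by
      by_contra hip
      have hpi : ¬ p = i := fun h' => hip h'.symm
      by_cases hqi : q = i <;>
        simp [hji, hpi, hqi, Complex.ext_iff] at hi <;> norm_num at hi
    have hpj : ¬ p = j := fun h' => hij (hip.trans h')
    have hjq : j = q := by
      by_contra hjq
      have hqj : ¬ q = j := fun h' => hjq h'.symm
      simp [hij, hpj, hqj, Complex.ext_iff] at hj <;> norm_num at hj
    exact ⟨hip, hjq⟩

lemma vanish' (d : ℕ) (𝒞 : Matrix (Fin d) (Fin d) ℂ →ₗ[ℂ] Matrix (Fin d) (Fin d) ℂ)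
    (hcov : ∀ U ∈ Matrix.unitaryGroup (Fin d) ℂ,
      ∀ ρ : Matrix (Fin d) (Fin d) ℂ, 𝒞 (U * ρ * star U) = U * 𝒞 ρ * star U)
    (i j p q : Fin d) (hne : ¬ ((i = j ∧ p = q) ∨ (i = p ∧ j = q))) :
    𝒞 (Matrix.single i j 1) p q = 0 := by
  by_contra hX
  apply hne
  apply phase_comb'
  intro k
  set w : Fin d → ℂ := fun m => if m = k then Complex.I else 1 with hw
  have hU : Matrix.diagonal w ∈ Matrix.unitaryGroup (Fin d) ℂ := by
    rw [Matrix.mem_unitaryGroup_iff']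
    rw [Matrix.star_eq_conjTranspose, Matrix.diagonal_conjTranspose, Matrix.diagonal_mul_diagonal]
    convert Matrix.diagonal_one
    rename_i m
    by_cases h : m = k <;> simp [h, Pi.star_apply, w]
  have hconj : Matrix.diagonal w * Matrix.single i j 1 * star (Matrix.diagonal w)
      = (w i * star (w j)) • Matrix.single i j 1 := by
    rw [Matrix.star_eq_conjTranspose, Matrix.diagonal_conjTranspose]
    ext p' q'
    simp only [Matrix.diagonal_mul, Matrix.mul_diagonal, Matrix.smul_apply, smul_eq_mul]
    by_cases h1 : i = p' <;> by_cases h2 : j = q' <;>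
      simp [h1, h2, Matrix.single, Pi.star_apply] <;> ring
  have hc := hcov _ hU (Matrix.single i j 1)
  rw [hconj, _root_.map_smul] at hc
  have hc2 := congrFun (congrFun hc p) q
  simp only [Matrix.smul_apply, smul_eq_mul] at hc2
  have hrhs : (Matrix.diagonal w * 𝒞 (Matrix.single i j 1) * star (Matrix.diagonal w)) p q
      = (w p * star (w q)) * 𝒞 (Matrix.single i j 1) p q := by
    rw [Matrix.star_eq_conjTranspose, Matrix.diagonal_conjTranspose]
    simp only [Matrix.diagonal_mul, Matrix.mul_diagonal, Pi.star_apply]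
    ring
  rw [hrhs] at hc2
  have := mul_right_cancel₀ hX hc2
  simpa [hw, eq_comm] using this

lemma permP' (d : ℕ) (𝒞 : Matrix (Fin d) (Fin d) ℂ →ₗ[ℂ] Matrix (Fin d) (Fin d) ℂ)
    (hcov : ∀ U ∈ Matrix.unitaryGroup (Fin d) ℂ,
      ∀ ρ : Matrix (Fin d) (Fin d) ℂ, 𝒞 (U * ρ * star U) = U * 𝒞 ρ * star U)
    (σ : Equiv.Perm (Fin d)) (i j p q : Fin d) :
    𝒞 (Matrix.single (σ i) (σ j) 1) (σ p) (σ q)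
      = 𝒞 (Matrix.single i j 1) p q := by
  set P : Matrix (Fin d) (Fin d) ℂ := Matrix.of (fun a b => if σ b = a then 1 else 0) with hP
  have hPs : star P = Matrix.of (fun a b => if σ a = b then (1:ℂ) else 0) := by
    rw [Matrix.star_eq_conjTranspose]
    ext a b
    simp [Matrix.conjTranspose_apply, P]
  have hU : P ∈ Matrix.unitaryGroup (Fin d) ℂ := by
    rw [Matrix.mem_unitaryGroup_iff']
    ext a b
    rw [Matrix.mul_apply]
    simp [hPs, P, Matrix.one_apply, Finset.sum_ite_eq, σ.injective.eq_iff]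
  have hconj : P * Matrix.single i j 1 * star P
      = Matrix.single (σ i) (σ j) 1 := by
    rw [hPs]
    ext a b
    simp [Matrix.mul_apply, Matrix.single, P, mul_ite, ite_mul,
      Finset.sum_ite_eq, Finset.sum_ite_eq', σ.injective.eq_iff,
      Equiv.apply_eq_iff_eq_symm_apply, ite_and]
    by_cases h1 : i = σ.symm a <;> by_cases h2 : j = σ.symm b <;> simp [h1, h2]
  have hc := hcov _ hU (Matrix.single i j 1)
  rw [hconj] at hc
  have hc2 := congrFun (congrFun hc (σ p)) (σ q)
  rw [hc2]
  rw [hPs, Matrix.mul_apply]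
  simp [Matrix.mul_apply, P, σ.injective.eq_iff, Finset.sum_ite_eq]

lemma nonneg_of_nat_mul' (d : ℕ) (hd : 0 < d) (α : ℂ) (h : 0 ≤ (d:ℂ) * α) : 0 ≤ α := by
  rw [Complex.le_def] at h ⊢
  have hd' : (0:ℝ) < d := by exact_mod_cast hd
  have h1 : 0 ≤ (d:ℝ) * α.re := by simpa using h.1
  have h2 : (d:ℝ) * α.im = 0 := by simpa using h.2.symm
  have him : α.im = 0 := by
    rcases mul_eq_zero.mp h2 with h' | h'
    · exact absurd h' (by positivity)
    · exact h'
  constructor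
  · simpa using nonneg_of_mul_nonneg_right h1 hd'
  · simp [him]

lemma dyadM_posSemidef' {m n : Type} [Fintype m] [Fintype n] (K : Matrix m n ℂ) :
    (dyadM K).PosSemidef := by
  refine Matrix.PosSemidef.of_dotProduct_mulVec_nonneg ?_ ?_
  · ext p q
    simp [dyadM, Matrix.conjTranspose_apply, mul_comm]
  · intro x
    have hform : dotProduct (star x) (Matrix.mulVec (dyadM K) x)
        = (∑ p, star (x p) * K p.1 p.2) * star (∑ p, star (x p) * K p.1 p.2) := by
      rw [Finset.sum_mul]
      simp only [dotProduct, Matrix.mulVec, dotProduct, dyadM,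
        Pi.star_apply, Finset.mul_sum, star_sum, star_mul', star_star]
      refine Finset.sum_congr rfl fun p _ => Finset.sum_congr rfl fun q _ => by ring
    rw [hform]
    set z := ∑ p, star (x p) * K p.1 p.2
    rw [show z * star z = (Complex.normSq z : ℂ) from Complex.mul_conj z]
    rw [Complex.le_def]
    simp [Complex.normSq_nonneg]

set_option maxHeartbeats 1000000 in
lemma master' (d : ℕ) (hd : 2 ≤ d)
    (𝒞 : Matrix (Fin d) (Fin d) ℂ →ₗ[ℂ] Matrix (Fin d) (Fin d) ℂ)
    (hcov : ∀ U ∈ Matrix.unitaryGroup (Fin d) ℂ,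
      ∀ ρ : Matrix (Fin d) (Fin d) ℂ, 𝒞 (U * ρ * star U) = U * 𝒞 ρ * star U) :
    ∃ a b : ℂ, ∀ i j p q : Fin d,
      𝒞 (Matrix.single i j 1) p q
        = (a - b) * (if p = i ∧ q = j then 1 else 0)
          + b * (if p = q ∧ i = j then 1 else 0) := by
  have hd0 : (d:ℂ) ≠ 0 := by
    have : 0 < d := by omega
    exact_mod_cast Nat.cast_ne_zero.mpr (by omega)
  set z0 : Fin d := ⟨0, by omega⟩ with hz0
  set z1 : Fin d := ⟨1, by omega⟩ with hz1
  have hz : z0 ≠ z1 := by simp [hz0, hz1, Fin.ext_iff]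
  set E : Fin d → Fin d → Matrix (Fin d) (Fin d) ℂ :=
    fun i j => Matrix.single i j 1 with hE
  set a : ℂ := 𝒞 (E z0 z0) z0 z0 with ha
  set b : ℂ := 𝒞 (E z0 z0) z1 z1 with hb
  set c : ℂ := 𝒞 (E z0 z1) z0 z1 with hc
  have hvan : ∀ i j p q : Fin d, ¬ ((i = j ∧ p = q) ∨ (i = p ∧ j = q)) →
      𝒞 (E i j) p q = 0 := fun i j p q h => vanish' d 𝒞 hcov i j p q h
  have hperm := permP' d 𝒞 hcov
  -- existence of permutations sending (z0, z1) to an arbitrary pair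
  have hpair : ∀ i p : Fin d, i ≠ p → ∃ σ : Equiv.Perm (Fin d), σ z0 = i ∧ σ z1 = p := by
    intro i p hip
    set τ := Equiv.swap z0 i with hτ
    have hx : τ.symm p ≠ z0 := by
      intro h'
      apply hip
      have : p = τ z0 := by rw [← h']; simp
      simpa [hτ, Equiv.swap_apply_left] using this.symm
    have h0 : (Equiv.swap z1 (τ.symm p)) z0 = z0 :=
      Equiv.swap_apply_of_ne_of_ne hz (Ne.symm hx)
    refine ⟨(Equiv.swap z1 (τ.symm p)).trans τ, ?_, ?_⟩
    · rw [Equiv.trans_apply, h0, hτ, Equiv.swap_apply_left]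
    · rw [Equiv.trans_apply, Equiv.swap_apply_left, Equiv.apply_symm_apply]
  have hdiag : ∀ i : Fin d, 𝒞 (E i i) i i = a := by
    intro i
    have h := hperm (Equiv.swap z0 i) z0 z0 z0 z0
    rw [Equiv.swap_apply_left] at h
    exact h
  have hoff : ∀ i p : Fin d, i ≠ p → 𝒞 (E i i) p p = b := by
    intro i p hip
    obtain ⟨σ, h1, h2⟩ := hpair i p hip
    have h := hperm σ z0 z0 z1 z1
    rw [h1, h2] at h
    exact h
  have hcval : ∀ i j : Fin d, i ≠ j → 𝒞 (E i j) i j = c := by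
    intro i j hij
    obtain ⟨σ, h1, h2⟩ := hpair i j hij
    have h := hperm σ z0 z1 z0 z1
    rw [h1, h2] at h
    exact h
  -- the rotation unitary giving c = a - b
  have happly : ∀ i j p q : Fin d, E i j p q = if i = p ∧ j = q then 1 else 0 := by
    intro i j p q
    simp [hE, Matrix.single]
  have hM : 𝒞 (E z0 z0) = (a - b) • E z0 z0 + b • 1 := by
    ext p q
    rw [Matrix.add_apply, Matrix.smul_apply, Matrix.smul_apply, Matrix.one_apply]
    by_cases hpq : p = q
    · subst hpq
      by_cases hp0 : p = z0
      · rw [hp0]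
        rw [happly, if_pos ⟨rfl, rfl⟩, ← ha]
        simp
        try ring
      · rw [hoff z0 p (fun h => hp0 h.symm)]
        rw [happly, if_neg (fun h => hp0 h.1.symm)]
        simp
    · have hv : ¬ ((z0 = z0 ∧ p = q) ∨ (z0 = p ∧ z0 = q)) := by
        rintro (⟨-, h⟩ | ⟨h1, h2⟩)
        · exact hpq h
        · exact hpq (h1 ▸ h2 ▸ rfl)
      rw [hvan z0 z0 p q hv]
      rw [happly, if_neg (fun h : z0 = p ∧ z0 = q => hpq (h.1 ▸ h.2 ▸ rfl))]
      simp [hpq]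
  have hcab : c = a - b := by
    set Q : Matrix (Fin d) (Fin d) ℂ := E z0 z0 + E z1 z1 with hQ
    set S : Matrix (Fin d) (Fin d) ℂ := E z1 z0 - E z0 z1 with hS
    have hz' : z1 ≠ z0 := hz.symm
    have mulEE : ∀ i j k l : Fin d, E i j * E k l = if j = k then E i l else 0 := by
      intro i j k l
      by_cases h : j = k
      · subst h
        rw [if_pos rfl]
        have := Matrix.single_mul_single_same (c := (1:ℂ)) i j l 1
        rw [one_mul] at this
        exact this
      · rw [if_neg h]
        exact Matrix.single_mul_single_of_ne (c := (1:ℂ)) i j k h 1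
    have hQ2 : Q * Q = Q := by
      simp only [hQ, add_mul, mul_add, mulEE, if_pos, if_neg hz, if_neg hz']
      try simp
      try abel
    have hQS : Q * S = S := by
      simp only [hQ, hS, add_mul, mul_sub, mul_add, mulEE, if_pos, if_neg hz, if_neg hz']
      try simp
      try abel
    have hSQ : S * Q = S := by
      simp only [hQ, hS, sub_mul, mul_add, add_mul, mulEE, if_pos, if_neg hz, if_neg hz']
      try simp
      try abel
    have hS2 : S * S = -Q := by
      simp only [hQ, hS, sub_mul, mul_sub, mulEE, if_pos, if_neg hz, if_neg hz']
      try simp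
      try abel
    have hstar : ∀ i j : Fin d, star (E i j) = E j i := by
      intro i j
      rw [Matrix.star_eq_conjTranspose]
      ext p q
      simp [hE, Matrix.conjTranspose_apply, Matrix.single, and_comm]
    set U : Matrix (Fin d) (Fin d) ℂ := 1 - (2/5 : ℂ) • Q + (4/5 : ℂ) • S with hUdef
    have hUs : star U = 1 - (2/5 : ℂ) • Q - (4/5 : ℂ) • S := by
      simp [hUdef, hQ, hS, star_sub, star_add, star_smul, hstar, smul_sub, smul_add]
      try abel
    have hQs : star Q = Q := by simp [hQ, hstar]
    have hSs : star S = -S := by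
      simp [hS, star_sub, hstar]
      try abel
    have hUU : star U * U = 1 := by
      rw [hUs, hUdef]
      simp only [mul_sub, sub_mul, mul_add, add_mul, one_mul, mul_one,
        smul_mul_assoc, mul_smul_comm, smul_smul, hQ2, hQS, hSQ, hS2, smul_neg]
      module
    have hU : U ∈ Matrix.unitaryGroup (Fin d) ℂ := Matrix.mem_unitaryGroup_iff'.mpr hUU
    have hUUs : U * star U = 1 := Matrix.mem_unitaryGroup_iff.mp hU
    have hrot : U * E z0 z0 * star U
        = (9/25 : ℂ) • E z0 z0 + (12/25 : ℂ) • E z0 z1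
          + (12/25 : ℂ) • E z1 z0 + (16/25 : ℂ) • E z1 z1 := by
      rw [hUs, hUdef]
      simp only [hQ, hS, mul_sub, sub_mul, mul_add, add_mul, one_mul, mul_one,
        smul_mul_assoc, mul_smul_comm, smul_smul, smul_neg, smul_sub, smul_add,
        mulEE, if_pos, if_neg hz, if_neg hz', mul_zero, zero_mul, smul_zero]
      try simp only [if_pos rfl]
      module
    have hcv := hcov U hU (E z0 z0)
    rw [hrot] at hcv
    rw [hM] at hcv
    have hlhs : 𝒞 ((9/25 : ℂ) • E z0 z0 + (12/25 : ℂ) • E z0 z1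
          + (12/25 : ℂ) • E z1 z0 + (16/25 : ℂ) • E z1 z1)
        = (9/25 : ℂ) • 𝒞 (E z0 z0) + (12/25 : ℂ) • 𝒞 (E z0 z1)
          + (12/25 : ℂ) • 𝒞 (E z1 z0) + (16/25 : ℂ) • 𝒞 (E z1 z1) := by
      simp [map_add, _root_.map_smul]
    rw [hlhs] at hcv
    have hrhs : U * ((a - b) • E z0 z0 + b • 1) * star U
        = (a - b) • (U * E z0 z0 * star U) + b • 1 := by
      rw [Matrix.mul_add, Matrix.add_mul, mul_smul_comm, mul_smul_comm,
        smul_mul_assoc, smul_mul_assoc, mul_one, hUUs]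
    rw [hrhs, hrot] at hcv
    have hcv2 := congrFun (congrFun hcv z0) z1
    have e1 : 𝒞 (E z0 z0) z0 z1 = 0 := hvan z0 z0 z0 z1 (by tauto)
    have e2 : 𝒞 (E z1 z0) z0 z1 = 0 := hvan z1 z0 z0 z1 (by tauto)
    have e3 : 𝒞 (E z1 z1) z0 z1 = 0 := hvan z1 z1 z0 z1 (by tauto)
    simp only [Matrix.add_apply, Matrix.smul_apply, smul_eq_mul, e1, e2, e3,
      Matrix.one_apply_ne hz, ← hc] at hcv2
    have hEvals : E z0 z0 z0 z1 = 0 ∧ E z0 z1 z0 z1 = 1 ∧ E z1 z0 z0 z1 = 0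
        ∧ E z1 z1 z0 z1 = 0 := by
      refine ⟨?_, ?_, ?_, ?_⟩ <;> simp [hE, Matrix.single, hz, hz.symm]
    rw [hEvals.1, hEvals.2.1, hEvals.2.2.1, hEvals.2.2.2] at hcv2
    have : (12/25 : ℂ) * c = (a - b) * (12/25) := by linear_combination hcv2
    field_simp at this
    linear_combination this
  -- the master entry formula
  have hEntry : ∀ i j p q : Fin d, 𝒞 (E i j) p q
      = (a - b) * (if p = i ∧ q = j then 1 else 0)
        + b * (if p = q ∧ i = j then 1 else 0) := by
    intro i j p q
    by_cases h1 : p = i ∧ q = j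
    · obtain ⟨hpi, hqj⟩ := h1
      subst hpi; subst hqj
      by_cases h2 : p = q ∧ (p:Fin d) = q
      · obtain ⟨hpq, -⟩ := h2
        subst hpq
        simp [hdiag p]
        try ring
      · have hpq : p ≠ q := fun h' => h2 ⟨h', h'⟩
        rw [hcval p q hpq, hcab]
        simp [hpq]
    · by_cases h2 : p = q ∧ i = j
      · obtain ⟨hpq, hij⟩ := h2
        subst hpq; subst hij
        have hip : i ≠ p := fun h' => h1 ⟨h'.symm, h'.symm⟩
        have hpi : ¬ p = i := fun h' => h1 ⟨h', h'⟩
        rw [hoff i p hip]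
        simp [hpi]
      · rw [hvan i j p q (by tauto)]
        simp [h1, h2]
  exact ⟨a, b, hEntry⟩

set_option maxHeartbeats 1000000 in
theorem stmt11 (d : ℕ) (hd : 2 ≤ d)
    (𝒞 : Matrix (Fin d) (Fin d) ℂ →ₗ[ℂ] Matrix (Fin d) (Fin d) ℂ)
    (hcov : ∀ U ∈ Matrix.unitaryGroup (Fin d) ℂ,
      ∀ ρ : Matrix (Fin d) (Fin d) ℂ, 𝒞 (U * ρ * star U) = U * 𝒞 ρ * star U) :
    ∃ α β : ℂ,
      choiFun ⇑𝒞 =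
        α • ((1 / (d : ℂ)) • dyadM (1 : Matrix (Fin d) (Fin d) ℂ)) +
        β • ((1 : Matrix (Fin d × Fin d) (Fin d × Fin d) ℂ) -
              (1 / (d : ℂ)) • dyadM (1 : Matrix (Fin d) (Fin d) ℂ)) ∧
      ((∀ A : Matrix (Fin d) (Fin d) ℂ, (𝒞 A).trace = A.trace) →
        α + ((d : ℂ) ^ 2 - 1) * β = (d : ℂ)) ∧
      (IsCPMap 𝒞 → 0 ≤ α ∧ 0 ≤ β) := by
  obtain ⟨a, b, hEntry⟩ := master' d hd 𝒞 hcov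
  have hd0 : (d:ℂ) ≠ 0 := by
    exact_mod_cast Nat.cast_ne_zero.mpr (show d ≠ 0 by omega)
  set z0 : Fin d := ⟨0, by omega⟩ with hz0
  set z1 : Fin d := ⟨1, by omega⟩ with hz1
  have hz : z0 ≠ z1 := by simp [hz0, hz1, Fin.ext_iff]
  set E : Fin d → Fin d → Matrix (Fin d) (Fin d) ℂ :=
    fun i j => Matrix.single i j 1 with hE
  have hchoi : ∀ r s : Fin d × Fin d, choiFun ⇑𝒞 r s
      = (a - b) * (if r.1 = r.2 ∧ s.1 = s.2 then 1 else 0)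
        + b * (if r = s then 1 else 0) := by
    rintro ⟨p, i⟩ ⟨q, j⟩
    rw [choiFun_apply' ⇑𝒞 p q i j]
    rw [hEntry i j p q]
    congr 1
    congr 1
    simp [Prod.ext_iff, and_comm]
  refine ⟨(a - b) * d + b, b, ?_, ?_, ?_⟩
  · ext r s
    rw [hchoi r s]
    have hdy : dyadM (1 : Matrix (Fin d) (Fin d) ℂ) r s
        = (if r.1 = r.2 then (1:ℂ) else 0) * (if s.1 = s.2 then 1 else 0) := by
      simp [dyadM, Matrix.one_apply, apply_ite (star : ℂ → ℂ)]
    simp only [Matrix.add_apply, Matrix.smul_apply, Matrix.sub_apply, Matrix.one_apply,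
      hdy, smul_eq_mul]
    by_cases h1 : r.1 = r.2 <;> by_cases h2 : s.1 = s.2 <;>
      simp [h1, h2, mul_ite, ite_mul, mul_zero, zero_mul, mul_one, one_mul] <;>
      field_simp <;> (try ring) <;> (try (split <;> ring))
  · intro htp
    have h1 : (𝒞 (E z0 z0)).trace = (E z0 z0).trace := htp (E z0 z0)
    have h2 : (E z0 z0).trace = 1 := by
      simp [hE, Matrix.trace, Matrix.diag, Matrix.single, ite_and]
    have h3 : (𝒞 (E z0 z0)).trace = (a - b) + d * b := by
      simp only [Matrix.trace, Matrix.diag]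
      have : ∀ p : Fin d, 𝒞 (E z0 z0) p p
          = (a - b) * (if p = z0 then 1 else 0) + b := by
        intro p
        rw [show E z0 z0 = Matrix.single z0 z0 1 from rfl, hEntry z0 z0 p p]
        simp
      rw [Finset.sum_congr rfl fun p _ => this p]
      rw [Finset.sum_add_distrib]
      simp [Finset.mul_sum, mul_comm]
    rw [h2, h3] at h1
    linear_combination (d:ℂ) * h1
  · intro hcp
    have hchoiTensor : tensorId ⇑𝒞 (dyadM (1 : Matrix (Fin d) (Fin d) ℂ)) = choiFun ⇑𝒞 := by
      ext ⟨p1, p2⟩ ⟨q1, q2⟩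
      rw [choiFun_apply' ⇑𝒞 p1 q1 p2 q2]
      show 𝒞 (fun i j => dyadM (1 : Matrix (Fin d) (Fin d) ℂ) (i, p2) (j, q2)) p1 q1 = _
      have harg : (fun i j => dyadM (1 : Matrix (Fin d) (Fin d) ℂ) (i, p2) (j, q2))
          = Matrix.single p2 q2 (1:ℂ) := by
        funext i j
        simp only [dyadM, Matrix.one_apply, Matrix.single, Matrix.of_apply,
          apply_ite (star : ℂ → ℂ), star_one, star_zero, ite_mul, one_mul, zero_mul,
          mul_ite, mul_one, mul_zero]
        by_cases hp : p2 = i <;> by_cases hq : q2 = j <;>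
          simp [hp, hq, eq_comm]
      rw [harg]
    have hpsd : (choiFun ⇑𝒞).PosSemidef := by
      rw [← hchoiTensor]
      exact hcp d (dyadM 1) (dyadM_posSemidef' 1)
    have hdsum : (∑ s : Fin d × Fin d, if s.1 = s.2 then (1:ℂ) else 0) = (d : ℂ) := by
      rw [Fintype.sum_prod_type]
      simp [Finset.sum_ite_eq]
    constructor
    · -- α ≥ 0
      set x : Fin d × Fin d → ℂ := fun r => if r.1 = r.2 then 1 else 0 with hx
      have hrow : ∀ r : Fin d × Fin d, Matrix.mulVec (choiFun ⇑𝒞) x r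
          = ((a - b) * d + b) * x r := by
        intro r
        simp only [Matrix.mulVec, dotProduct]
        rw [Finset.sum_congr rfl fun s _ => by rw [hchoi r s]]
        have key : ∀ s : Fin d × Fin d,
            ((a - b) * (if r.1 = r.2 ∧ s.1 = s.2 then 1 else 0)
              + b * (if r = s then 1 else 0)) * x s
            = (a - b) * (if r.1 = r.2 then 1 else 0) * (if s.1 = s.2 then (1:ℂ) else 0)
              + b * (if r = s then (1:ℂ) else 0) * (if s.1 = s.2 then 1 else 0) := by
          intro s
          by_cases hA : r.1 = r.2 <;> by_cases hB : s.1 = s.2 <;> simp [hx, hA, hB]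
        rw [Finset.sum_congr rfl fun s _ => key s, Finset.sum_add_distrib]
        have s1 : (∑ s : Fin d × Fin d,
            (a - b) * (if r.1 = r.2 then 1 else 0) * (if s.1 = s.2 then (1:ℂ) else 0))
            = (a - b) * (if r.1 = r.2 then 1 else 0) * d := by
          rw [← Finset.mul_sum, hdsum]
        have s2 : (∑ s : Fin d × Fin d,
            b * (if r = s then (1:ℂ) else 0) * (if s.1 = s.2 then 1 else 0))
            = b * (if r.1 = r.2 then 1 else 0) := by
          rw [Finset.sum_eq_single r]
          · simp
          · intro s _ hs
            have hrs : ¬ r = s := fun h => hs h.symm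
            simp [hrs]
          · intro h
            exact absurd (Finset.mem_univ r) h
        rw [s1, s2]
        by_cases hr : r.1 = r.2 <;> simp [hx, hr] <;> ring
      have hform := hpsd.dotProduct_mulVec_nonneg x
      have hval : dotProduct (star x) (Matrix.mulVec (choiFun ⇑𝒞) x)
          = (d : ℂ) * ((a - b) * d + b) := by
        simp only [dotProduct, Pi.star_apply]
        have key : ∀ r : Fin d × Fin d,
            star (x r) * Matrix.mulVec (choiFun ⇑𝒞) x r
            = ((a - b) * d + b) * (if r.1 = r.2 then (1:ℂ) else 0) := by
          intro r
          rw [hrow r]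
          by_cases hr : r.1 = r.2 <;> simp [hx, hr] <;> ring
        rw [Finset.sum_congr rfl fun r _ => key r, ← Finset.mul_sum, hdsum]
        ring
      rw [hval] at hform
      exact nonneg_of_nat_mul' d (by omega) _ hform
    · -- β ≥ 0
      set x : Fin d × Fin d → ℂ := fun r => if r = (z0, z1) then 1 else 0 with hx
      have hrow : ∀ r : Fin d × Fin d, Matrix.mulVec (choiFun ⇑𝒞) x r
          = choiFun ⇑𝒞 r (z0, z1) := by
        intro r
        simp only [Matrix.mulVec, dotProduct, hx, mul_ite, mul_one, mul_zero]
        rw [Finset.sum_ite_eq' Finset.univ ((z0, z1) : Fin d × Fin d) (fun s => choiFun ⇑𝒞 r s)]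
        simp
      have hform := hpsd.dotProduct_mulVec_nonneg x
      have hval : dotProduct (star x) (Matrix.mulVec (choiFun ⇑𝒞) x) = b := by
        simp only [dotProduct, hrow]
        simp only [dotProduct, Pi.star_apply, hrow, hx, apply_ite (star : ℂ → ℂ),
          star_one, star_zero, ite_mul, one_mul, zero_mul]
        rw [Finset.sum_ite_eq' Finset.univ ((z0, z1) : Fin d × Fin d)
          (fun r => choiFun ⇑𝒞 r (z0, z1))]
        simp [hchoi, hz]
      rw [hval] at hform
      exact hform
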